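/- Let A and B be n×n Hermitian positive semidefinite complex matrices such that A - B is positive semidefinite. Then det(I + A) and det(I + B) are positive real numbers and 0 ≤ log det(I + A) - log det(I + B) ≤ log det(I + (A - B)). -/

import Mathlib

open scoped ComplexOrder

open Matrix in
private lemma aux_posDef_one {n : ℕ} : (1 : Matrix (Fin n) (Fin n) ℂ).PosDef := by
  exact Matrix.PosDef.one

open Matrix in
/-- det (1 + S) is a real number ≥ 1 for S psd. -/
private lemma det_conj {n : ℕ} (U X : Matrix (Fin n) (Fin n) ℂ) (hU : U * star U = 1) :
    (U * X * star U).det = X.det := by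
  have hdetU : U.det * (star U).det = 1 := by rw [← Matrix.det_mul, hU, Matrix.det_one]
  rw [Matrix.det_mul, Matrix.det_mul]
  calc U.det * X.det * (star U).det = X.det * (U.det * (star U).det) := by ring
    _ = X.det := by rw [hdetU, mul_one]

open Matrix in
private lemma aux_detA {n : ℕ} {S : Matrix (Fin n) (Fin n) ℂ} (hS : S.PosSemidef) :
    ∃ r : ℝ, 1 ≤ r ∧ (1 + S).det = (r : ℂ) := by
  refine ⟨∏ i, (1 + hS.1.eigenvalues i), ?_, ?_⟩
  · calc (1 : ℝ) = ∏ _i : Fin n, 1 := by simp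
      _ ≤ ∏ i, (1 + hS.1.eigenvalues i) :=
        Finset.prod_le_prod (fun i _ => zero_le_one)
          (fun i _ => le_add_of_nonneg_right (hS.eigenvalues_nonneg i))
  · have hU : (hS.1.eigenvectorUnitary : Matrix (Fin n) (Fin n) ℂ) *
        star (hS.1.eigenvectorUnitary : Matrix (Fin n) (Fin n) ℂ) = 1 :=
      Matrix.mem_unitaryGroup_iff.mp hS.1.eigenvectorUnitary.2
    have h1 : (1 + S) = (hS.1.eigenvectorUnitary : Matrix (Fin n) (Fin n) ℂ) *
        (1 + diagonal (RCLike.ofReal ∘ hS.1.eigenvalues)) *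
        star (hS.1.eigenvectorUnitary : Matrix (Fin n) (Fin n) ℂ) := by
      rw [Matrix.mul_add, Matrix.add_mul, Matrix.mul_one, hU]
      exact congrArg (1 + ·) hS.1.spectral_theorem
    have h3 : (1 : Matrix (Fin n) (Fin n) ℂ) + diagonal (RCLike.ofReal ∘ hS.1.eigenvalues)
        = diagonal (fun i => 1 + (hS.1.eigenvalues i : ℂ)) := by
      rw [← Matrix.diagonal_one, Matrix.diagonal_add]
      rfl
    rw [h1, det_conj _ _ hU, h3, Matrix.det_diagonal]
    push_cast
    rfl

open scoped MatrixOrder in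
noncomputable def Matrix.PosSemidef.sqrt {n : ℕ} {A : Matrix (Fin n) (Fin n) ℂ}
    (_hA : A.PosSemidef) : Matrix (Fin n) (Fin n) ℂ := CFC.sqrt A

open scoped MatrixOrder in
lemma Matrix.PosSemidef.posSemidef_sqrt {n : ℕ} {A : Matrix (Fin n) (Fin n) ℂ}
    (hA : A.PosSemidef) : hA.sqrt.PosSemidef := Matrix.nonneg_iff_posSemidef.mp (CFC.sqrt_nonneg A)

open scoped MatrixOrder in
lemma Matrix.PosSemidef.sqrt_mul_self {n : ℕ} {A : Matrix (Fin n) (Fin n) ℂ}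
    (hA : A.PosSemidef) : hA.sqrt * hA.sqrt = A := CFC.sqrt_mul_sqrt_self A hA.nonneg

open Matrix in
/-- Factorization: det (P + D) = det P * det (1 + √D * P⁻¹ * √D). -/
private lemma aux_detK {n : ℕ} {P D : Matrix (Fin n) (Fin n) ℂ} (hP : P.PosDef)
    (hD : D.PosSemidef) :
    (P + D).det = P.det * (1 + hD.sqrt * P⁻¹ * hD.sqrt).det := by
  set R := hP.posSemidef.sqrt with hRdef
  have hR : R.PosSemidef := hP.posSemidef.posSemidef_sqrt
  have hRR : R * R = P := hP.posSemidef.sqrt_mul_self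
  have hdetR : R.det * R.det = P.det := by rw [← Matrix.det_mul, hRR]
  have hPdet : P.det ≠ 0 := hP.det_pos.ne'
  have hRdet : R.det ≠ 0 := fun h => hPdet (by rw [← hdetR, h, mul_zero])
  have hRunit : IsUnit R := (Matrix.isUnit_iff_isUnit_det R).2 hRdet.isUnit
  have hRinv : R * R⁻¹ = 1 := Matrix.mul_nonsing_inv R hRdet.isUnit
  have hRinv' : R⁻¹ * R = 1 := Matrix.nonsing_inv_mul R hRdet.isUnit
  set T := hD.sqrt with hTdef
  have hTT : T * T = D := hD.sqrt_mul_self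
  have hPinv : P⁻¹ = R⁻¹ * R⁻¹ := by rw [← hRR, Matrix.mul_inv_rev]
  have hfact : P + D = R * (1 + R⁻¹ * D * R⁻¹) * R := by
    rw [Matrix.mul_add, Matrix.mul_one, Matrix.add_mul, hRR]
    congr 1
    symm
    calc R * (R⁻¹ * D * R⁻¹) * R = (R * R⁻¹) * D * (R⁻¹ * R) := by
          simp only [Matrix.mul_assoc]
      _ = D := by rw [hRinv, hRinv', Matrix.one_mul, Matrix.mul_one]
  have h2 : R⁻¹ * D * R⁻¹ = (R⁻¹ * T) * (T * R⁻¹) := by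
    rw [← hTT]; simp only [Matrix.mul_assoc]
  have h4 : (T * R⁻¹) * (R⁻¹ * T) = T * P⁻¹ * T := by
    calc (T * R⁻¹) * (R⁻¹ * T) = T * (R⁻¹ * R⁻¹) * T := by simp only [Matrix.mul_assoc]
      _ = T * P⁻¹ * T := by rw [hPinv]
  have h3 : (1 + R⁻¹ * D * R⁻¹).det = (1 + T * P⁻¹ * T).det := by
    rw [h2, Matrix.det_one_add_mul_comm, h4]
  calc (P + D).det = R.det * (1 + R⁻¹ * D * R⁻¹).det * R.det := by
        rw [hfact, Matrix.det_mul, Matrix.det_mul]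
    _ = (R.det * R.det) * (1 + R⁻¹ * D * R⁻¹).det := by ring
    _ = P.det * (1 + T * P⁻¹ * T).det := by rw [hdetR, h3]

open Matrix in
/-- 1 - (1 + B)⁻¹ is psd for B psd. -/
private lemma aux_detD {n : ℕ} {B : Matrix (Fin n) (Fin n) ℂ} (hB : B.PosSemidef) :
    ((1 : Matrix (Fin n) (Fin n) ℂ) - (1 + B)⁻¹).PosSemidef := by
  have hP : (1 + B).PosDef := aux_posDef_one.add_posSemidef hB
  have hQ : ((1 + B)⁻¹).PosDef := hP.inv
  set T := hQ.posSemidef.sqrt with hTdef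
  have hT : T.PosSemidef := hQ.posSemidef.posSemidef_sqrt
  have hTT : T * T = (1 + B)⁻¹ := hQ.posSemidef.sqrt_mul_self
  have hdetQ : ((1 + B)⁻¹).det ≠ 0 := hQ.det_pos.ne'
  have hdetT : T.det ≠ 0 := by
    intro h
    apply hdetQ
    rw [← hTT, Matrix.det_mul, h, mul_zero]
  have hTinv : T * T⁻¹ = 1 := Matrix.mul_nonsing_inv T hdetT.isUnit
  have hTinv' : T⁻¹ * T = 1 := Matrix.nonsing_inv_mul T hdetT.isUnit
  have hPinv : (1 + B) = ((1 + B)⁻¹)⁻¹ := (Matrix.nonsing_inv_nonsing_inv _ hP.det_pos.ne'.isUnit).symm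
  have hTPT : T * (1 + B) * T = 1 := by
    rw [hPinv, ← hTT, Matrix.mul_inv_rev]
    calc T * (T⁻¹ * T⁻¹) * T = (T * T⁻¹) * (T⁻¹ * T) := by simp only [Matrix.mul_assoc]
      _ = 1 := by rw [hTinv, hTinv', Matrix.one_mul]
  have key : T * B * T = 1 - (1 + B)⁻¹ := by
    have : T * B * T = T * (1 + B) * T - T * T := by
      rw [Matrix.mul_add, Matrix.mul_one, Matrix.add_mul]
      abel
    rw [this, hTPT, hTT]
  rw [← key]
  have := hB.conjTranspose_mul_mul_same (B := T)
  rwa [hT.1] at this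

/-- Log-determinant inequality for Hermitian positive semidefinite complex matrices
with `A - B` positive semidefinite:
`det (I + A)` and `det (I + B)` are positive reals and
`0 ≤ log det (I + A) - log det (I + B) ≤ log det (I + (A - B))`. -/
theorem stmt_0 {n : ℕ} (A B : Matrix (Fin n) (Fin n) ℂ)
    (hA : A.PosSemidef) (hB : B.PosSemidef) (hAB : (A - B).PosSemidef) :
    (0 < (1 + A).det.re ∧ (1 + A).det.im = 0) ∧
    (0 < (1 + B).det.re ∧ (1 + B).det.im = 0) ∧
    0 ≤ Real.log (1 + A).det.re - Real.log (1 + B).det.re ∧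
    Real.log (1 + A).det.re - Real.log (1 + B).det.re ≤
      Real.log (1 + (A - B)).det.re := by
  classical
  obtain ⟨a, ha1, haeq⟩ := aux_detA hA
  obtain ⟨b, hb1, hbeq⟩ := aux_detA hB
  obtain ⟨c, hc1, hceq⟩ := aux_detA hAB
  have hP : (1 + B).PosDef := aux_posDef_one.add_posSemidef hB
  -- monotonicity: b ≤ a
  have hsplit : (1 : Matrix (Fin n) (Fin n) ℂ) + A = (1 + B) + (A - B) := by
    rw [add_assoc, add_sub_cancel]
  have hK1 := aux_detK hP hAB
  set F := hAB.sqrt * (1 + B)⁻¹ * hAB.sqrt with hFdef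
  have hF : F.PosSemidef := by
    have := hP.inv.posSemidef.conjTranspose_mul_mul_same (B := hAB.sqrt)
    rwa [hAB.posSemidef_sqrt.1] at this
  obtain ⟨f, hf1, hfeq⟩ := aux_detA hF
  have hba : (1 + A).det = ((b * f : ℝ) : ℂ) := by
    rw [hsplit, hK1, hbeq, hfeq]
    push_cast
    ring
  -- subadditivity: f ≤ c, hence a = b * f ≤ b * c
  have hCF : (A - B) - F = hAB.sqrt * (1 - (1 + B)⁻¹) * hAB.sqrt := by
    rw [Matrix.mul_sub, Matrix.mul_one, Matrix.sub_mul, hAB.sqrt_mul_self]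
  have hCFpsd : ((A - B) - F).PosSemidef := by
    rw [hCF]
    have := (aux_detD hB).conjTranspose_mul_mul_same (B := hAB.sqrt)
    rwa [hAB.posSemidef_sqrt.1] at this
  have hFposdef : (1 + F).PosDef := aux_posDef_one.add_posSemidef hF
  have hK2 := aux_detK hFposdef hCFpsd
  have hHpsd : (hCFpsd.sqrt * (1 + F)⁻¹ * hCFpsd.sqrt).PosSemidef := by
    have := hFposdef.inv.posSemidef.conjTranspose_mul_mul_same (B := hCFpsd.sqrt)
    rwa [hCFpsd.posSemidef_sqrt.1] at this
  obtain ⟨h, hh1, hheq⟩ := aux_detA hHpsd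
  have hsplit2 : (1 : Matrix (Fin n) (Fin n) ℂ) + (A - B) = (1 + F) + ((A - B) - F) := by
    rw [add_assoc, add_sub_cancel]
  have hceq2 : (c : ℂ) = ((f * h : ℝ) : ℂ) := by
    rw [← hceq, hsplit2, hK2, hfeq, hheq]
    push_cast
    ring
  have hfc : f ≤ c := by
    have : c = f * h := by exact_mod_cast hceq2
    calc f = f * 1 := (mul_one f).symm
      _ ≤ f * h := by
          exact mul_le_mul_of_nonneg_left hh1 (le_trans zero_le_one hf1)
      _ = c := this.symm
  -- extract real parts
  have hare : (1 + A).det.re = b * f := by rw [hba]; exact Complex.ofReal_re _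
  have haim : (1 + A).det.im = 0 := by rw [hba]; exact Complex.ofReal_im _
  have hbre : (1 + B).det.re = b := by rw [hbeq]; exact Complex.ofReal_re _
  have hbim : (1 + B).det.im = 0 := by rw [hbeq]; exact Complex.ofReal_im _
  have hcre : (1 + (A - B)).det.re = c := by rw [hceq]; exact Complex.ofReal_re _
  have hbpos : (0 : ℝ) < b := lt_of_lt_of_le one_pos hb1
  have hfpos : (0 : ℝ) < f := lt_of_lt_of_le one_pos hf1
  have hcpos : (0 : ℝ) < c := lt_of_lt_of_le one_pos hc1
  refine ⟨⟨?_, haim⟩, ⟨?_, hbim⟩, ?_, ?_⟩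
  · rw [hare]; positivity
  · rw [hbre]; exact hbpos
  · rw [hare, hbre]
    have : b ≤ b * f := le_mul_of_one_le_right hbpos.le hf1
    have := Real.log_le_log hbpos this
    linarith
  · rw [hare, hbre, hcre]
    rw [Real.log_mul hbpos.ne' hfpos.ne']
    have := Real.log_le_log hfpos hfc
    linarith
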